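/- Let X, Y, Z be open subsets of ℂ. Let f : X → ℂ be holomorphic with f(X) ⊆ Y and g : Y → ℂ holomorphic with g(Y) ⊆ Z, both nowhere constant. Assume f : X → Y has no asymptotic value in Y and g : Y → Z has no asymptotic value in Z. Then g ∘ f : X → Z has no asymptotic value in Z. -/

import Mathlib

open Filter Topology Metric Set


/-- `f` is constant on no nonempty open subset of `X`. -/
def NowhereConstantOn (f : ℂ → ℂ) (X : Set ℂ) : Prop :=
  ∀ U : Set ℂ, IsOpen U → U.Nonempty → U ⊆ X → ¬ ∃ c : ℂ, ∀ z ∈ U, f z = c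

/-- `y` is an asymptotic value of `f : X → ℂ`. -/
def IsAsympVal (f : ℂ → ℂ) (X : Set ℂ) (y : ℂ) : Prop :=
  ∃ γ : ℝ → ℂ,
    ContinuousOn γ (Set.Ico 0 1) ∧
    (∀ t ∈ Set.Ico (0:ℝ) 1, γ t ∈ X) ∧
    (∀ K : Set ℂ, K ⊆ X → IsCompact K →
      ∃ t₀ ∈ Set.Ico (0:ℝ) 1, ∀ t, t₀ ≤ t → t < 1 → γ t ∉ K) ∧
    Filter.Tendsto (fun t => f (γ t)) (nhdsWithin 1 (Set.Ico 0 1)) (nhds y)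

/-- `y` is an asymptotic value of `f : X → Y`. -/
def IsAsympValIn (f : ℂ → ℂ) (X Y : Set ℂ) (y : ℂ) : Prop :=
  y ∈ Y ∧ IsAsympVal f X y

private lemma freq_of_forall' {P : ℝ → Prop}
    (h : ∀ t₀, 0 ≤ t₀ → t₀ < 1 → ∃ t, t₀ ≤ t ∧ t < 1 ∧ P t) :
    ∃ᶠ t in nhdsWithin 1 (Set.Ico (0:ℝ) 1), P t := by
  rw [nhdsWithin_Ico_eq_nhdsLT zero_lt_one]
  rw [(nhdsLT_basis_of_exists_lt (⟨0, zero_lt_one⟩ : ∃ a : ℝ, a < 1)).frequently_iff]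
  intro a ha
  obtain ⟨t, ht₀, ht1, hP⟩ := h (max ((a + 1) / 2) 0) (le_max_right _ _)
    (max_lt (by linarith) zero_lt_one)
  refine ⟨t, ⟨?_, ht1⟩, hP⟩
  have : (a + 1) / 2 ≤ t := le_trans (le_max_left _ _) ht₀
  linarith

private lemma forall_of_freq' {P : ℝ → Prop}
    (h : ∃ᶠ t in nhdsWithin 1 (Set.Ico (0:ℝ) 1), P t) :
    ∀ t₀, 0 ≤ t₀ → t₀ < 1 → ∃ t, t₀ ≤ t ∧ t < 1 ∧ P t := by
  intro t₀ h0 h1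
  have h3 : ∀ᶠ t in nhdsWithin (1:ℝ) (Set.Ico 0 1), t ∈ Set.Ioo t₀ 2 :=
    Filter.Eventually.filter_mono nhdsWithin_le_nhds
      (Ioo_mem_nhds h1 (by norm_num))
  obtain ⟨t, hP, ht, hmem⟩ :=
    (h.and_eventually (h3.and (self_mem_nhdsWithin (s := Set.Ico (0:ℝ) 1)))).exists
  exact ⟨t, ht.1.le, hmem.2, hP⟩

private lemma cluster_of_freq_mem {L : Filter ℝ} {F : ℝ → ℂ} {K : Set ℂ}
    (hK : IsCompact K) (hfreq : ∃ᶠ t in L, F t ∈ K) :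
    ∃ y ∈ K, MapClusterPt y L F := by
  have hne : (L ⊓ 𝓟 {t | F t ∈ K}).NeBot := Filter.frequently_iff_neBot.mp hfreq
  have hle : Filter.map F (L ⊓ 𝓟 {t | F t ∈ K}) ≤ 𝓟 K := by
    rw [le_principal_iff, mem_map]
    exact mem_inf_of_right (by exact fun t ht => ht)
  obtain ⟨y, hyK, hy⟩ := hK.exists_clusterPt hle
  exact ⟨y, hyK, hy.mono (map_mono inf_le_left)⟩

private lemma cluster_val {L : Filter ℝ} [L.NeBot] {F : ℝ → ℂ} {g : ℂ → ℂ} {y z : ℂ}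
    (hy : MapClusterPt y L F) (hgc : ContinuousAt g y)
    (hz : Filter.Tendsto (fun t => g (F t)) L (nhds z)) : g y = z := by
  have h1 : MapClusterPt (g y) L (g ∘ F) := hy.continuousAt_comp hgc
  have h2 : ClusterPt (g y) (Filter.map (g ∘ F) L) := h1
  have h3 : Filter.map (g ∘ F) L ≤ nhds z := hz
  exact eq_of_nhds_neBot (h2.mono h3)

/-- if `f : X → Y` and `g : Y → Z` are nowhere constant holomorphic
maps without asymptotic values, then `g ∘ f : X → Z` has no asymptotic value. -/
theorem stmt_7 (X Y Z : Set ℂ) (hX : IsOpen X) (hY : IsOpen Y) (hZ : IsOpen Z)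
    (f g : ℂ → ℂ)
    (hf : DifferentiableOn ℂ f X) (hg : DifferentiableOn ℂ g Y)
    (hfXY : f '' X ⊆ Y) (hgYZ : g '' Y ⊆ Z)
    (hfnc : NowhereConstantOn f X) (hgnc : NowhereConstantOn g Y)
    (hfav : ¬ ∃ y : ℂ, IsAsympValIn f X Y y)
    (hgav : ¬ ∃ z : ℂ, IsAsympValIn g Y Z z) :
    ¬ ∃ z : ℂ, IsAsympValIn (g ∘ f) X Z z := by
  rintro ⟨z, hzZ, γ, hγc, hγX, hγesc, hγlim⟩
  have hLne : (nhdsWithin (1:ℝ) (Set.Ico 0 1)).NeBot := by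
    rw [nhdsWithin_Ico_eq_nhdsLT zero_lt_one]; infer_instance
  have hγlim' : Filter.Tendsto (fun t => g (f (γ t)))
      (nhdsWithin (1:ℝ) (Set.Ico 0 1)) (nhds z) := hγlim
  -- continuity and range of f ∘ γ
  have hfγc : ContinuousOn (fun t => f (γ t)) (Set.Ico (0:ℝ) 1) :=
    hf.continuousOn.comp hγc (fun t ht => hγX t ht)
  have hfγY : ∀ t ∈ Set.Ico (0:ℝ) 1, f (γ t) ∈ Y :=
    fun t ht => hfXY ⟨γ t, hγX t ht, rfl⟩
  by_cases hcase : ∀ K : Set ℂ, K ⊆ Y → IsCompact K →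
      ∃ t₀ ∈ Set.Ico (0:ℝ) 1, ∀ t, t₀ ≤ t → t < 1 → f (γ t) ∉ K
  · exact hgav ⟨z, hzZ, fun t => f (γ t), hfγc, hfγY, hcase, hγlim'⟩
  push_neg at hcase
  obtain ⟨K, hKY, hKc, hKfreq⟩ := hcase
  have hKfreq' : ∃ᶠ t in nhdsWithin (1:ℝ) (Set.Ico 0 1), f (γ t) ∈ K :=
    freq_of_forall' (fun t₀ h0 h1 => hKfreq t₀ ⟨h0, h1⟩)
  obtain ⟨y, hyK, hyc⟩ := cluster_of_freq_mem hKc hKfreq'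
  have hyY : y ∈ Y := hKY hyK
  have hgcy : ContinuousAt g y :=
    (hg.differentiableAt (hY.mem_nhds hyY)).continuousAt
  have hgyz : g y = z := cluster_val hyc hgcy hγlim'
  -- isolated fiber
  have hga : AnalyticAt ℂ (fun w => g w - z) y :=
    ((hg.analyticAt (hY.mem_nhds hyY)).sub analyticAt_const)
  rcases hga.eventually_eq_zero_or_eventually_ne_zero with heq | hne
  · -- g constant near y : contradiction with hgnc
    obtain ⟨s, hs_mem, hs⟩ := heq.exists_mem
    obtain ⟨t, ht, hts⟩ := Metric.mem_nhds_iff.mp hs_mem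
    obtain ⟨rY, hrY, hballY⟩ := Metric.isOpen_iff.mp hY y hyY
    refine hgnc (Metric.ball y (min t rY)) Metric.isOpen_ball
      ⟨y, Metric.mem_ball_self (lt_min ht hrY)⟩
      (fun w hw => hballY (Metric.ball_subset_ball (min_le_right _ _) hw)) ⟨z, ?_⟩
    intro w hw
    exact sub_eq_zero.mp (hs w (hts (Metric.ball_subset_ball (min_le_left _ _) hw)))
  · -- punctured neighborhood where g ≠ z
    rw [eventually_nhdsWithin_iff] at hne
    obtain ⟨ε, hε, hεne⟩ := Metric.eventually_nhds_iff.mp hne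
    obtain ⟨rY, hrY, hballY⟩ := Metric.isOpen_iff.mp hY y hyY
    set r : ℝ := min (ε / 2) (rY / 2) with hr
    have hr0 : 0 < r := lt_min (by linarith) (by linarith)
    have hrε : r < ε := lt_of_le_of_lt (min_le_left _ _) (by linarith)
    have hrY' : ∀ w : ℂ, dist w y ≤ r → w ∈ Y := by
      intro w hw
      exact hballY (by
        have : r ≤ rY / 2 := min_le_right _ _
        simp only [Metric.mem_ball]
        linarith)
    by_cases htend : Filter.Tendsto (fun t => f (γ t))
        (nhdsWithin (1:ℝ) (Set.Ico 0 1)) (nhds y)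
    · exact hfav ⟨y, hyY, γ, hγc, hγX, hγesc, htend⟩
    · rw [Metric.tendsto_nhds] at htend
      push_neg at htend
      obtain ⟨δ, hδ, hfr⟩ := htend
      have hfr' : ∃ᶠ t in nhdsWithin (1:ℝ) (Set.Ico 0 1),
          min δ r ≤ dist (f (γ t)) y := by
        refine hfr.mono fun t ht => ?_
        exact le_trans (min_le_left _ _) ht
      have hfr2 : ∃ᶠ t in nhdsWithin (1:ℝ) (Set.Ico 0 1),
          dist (f (γ t)) y < min δ r :=
        mapClusterPt_iff_frequently.mp hyc _ (Metric.ball_mem_nhds y (lt_min hδ hr0))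
      set δ' : ℝ := min δ r with hδ'
      have hδ'0 : 0 < δ' := lt_min hδ hr0
      have hδ'r : δ' ≤ r := min_le_right _ _
      -- IVT: frequently dist = δ'
      have hIVT : ∀ t₀, 0 ≤ t₀ → t₀ < 1 → ∃ t, t₀ ≤ t ∧ t < 1 ∧
          dist (f (γ t)) y = δ' := by
        intro t₀ h0 h1
        obtain ⟨u, hu0, hu1, hu⟩ := forall_of_freq' hfr2 t₀ h0 h1
        obtain ⟨s, hs0, hs1, hs⟩ := forall_of_freq' hfr' t₀ h0 h1
        have hsub : Set.uIcc u s ⊆ Set.Ico (0:ℝ) 1 := by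
          intro x hx
          rw [Set.mem_uIcc] at hx
          constructor
          · rcases hx with ⟨h, _⟩ | ⟨h, _⟩ <;> [exact le_trans (le_trans h0 hu0) h;
              exact le_trans (le_trans h0 hs0) h]
          · rcases hx with ⟨_, h⟩ | ⟨_, h⟩ <;> [exact lt_of_le_of_lt h hs1;
              exact lt_of_le_of_lt h hu1]
        have hcont : ContinuousOn (fun t => dist (f (γ t)) y) (Set.uIcc u s) :=
          ((continuous_id.dist continuous_const).comp_continuousOn (hfγc.mono hsub))
        have hmem : δ' ∈ Set.uIcc (dist (f (γ u)) y) (dist (f (γ s)) y) :=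
          Set.mem_uIcc.mpr (Or.inl ⟨hu.le, hs⟩)
        obtain ⟨t, htm, ht⟩ := intermediate_value_uIcc hcont hmem
        rw [Set.mem_uIcc] at htm
        refine ⟨t, ?_, ?_, ht⟩
        · rcases htm with ⟨h, _⟩ | ⟨h, _⟩ <;> [exact le_trans hu0 h; exact le_trans hs0 h]
        · rcases htm with ⟨_, h⟩ | ⟨_, h⟩ <;> [exact lt_of_le_of_lt h hs1;
            exact lt_of_le_of_lt h hu1]
      have hsfreq : ∃ᶠ t in nhdsWithin (1:ℝ) (Set.Ico 0 1),
          f (γ t) ∈ Metric.sphere y δ' := by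
        refine freq_of_forall' fun t₀ h0 h1 => ?_
        obtain ⟨t, a, b, c⟩ := hIVT t₀ h0 h1
        exact ⟨t, a, b, Metric.mem_sphere.mpr c⟩
      obtain ⟨y', hy's, hy'c⟩ := cluster_of_freq_mem (isCompact_sphere y δ') hsfreq
      have hy'd : dist y' y = δ' := hy's
      have hy'Y : y' ∈ Y := hrY' y' (by rw [hy'd]; exact hδ'r)
      have hgy' : g y' = z := cluster_val hy'c
        ((hg.differentiableAt (hY.mem_nhds hy'Y)).continuousAt) hγlim'
      have hy'ne : y' ≠ y := by
        intro h; rw [h, dist_self] at hy'd; exact absurd hy'd.symm (ne_of_gt hδ'0)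
      have : g y' - z ≠ 0 := hεne (show dist y' y < ε by rw [hy'd]; exact lt_of_le_of_lt hδ'r hrε) hy'ne
      exact this (by rw [hgy', sub_self])
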